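/- Let p = max(P(00), P(11)) and q = min(P(00), P(11)) for an n-integral stationary Markov chain P on a primitive subgraph G of D_{1,2} assigning positive probability to all its edges. For any n-tuple r with n₁ = π(0)n occurrences of 0 and n₂ = π(1)n occurrences of 1, there exists a (G,P,n)-array with Z+1 rows whose first row is r and whose last row is the left cyclic shift of U_π, where Z = max(2(2+⌈(P(10)+q−p)/p⌉), 2(1+⌈q/(2P(01))⌉)). -/

import Mathlib

/-- A directed graph on `{0,1}` (given by its edge set `E`) is primitive if for all
sufficiently large `N`, between every ordered pair of vertices there is a directed
path of length exactly `N`. -/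
def IsPrimitive (E : Set (Bool × Bool)) : Prop :=
  ∃ N₀ : ℕ, ∀ N ≥ N₀, ∀ u v : Bool, ∃ f : ℕ → Bool,
    f 0 = u ∧ f N = v ∧ ∀ i < N, (f i, f (i + 1)) ∈ E

namespace Stmt15
open Finset

variable {n : ℕ}

def cnt (s : Fin n → Bool) (b : Bool) : ℕ := (univ.filter (fun j => s j = b)).card

def mm (s s' : Fin n → Bool) (b b' : Bool) : ℕ :=
  (univ.filter (fun j => s j = b ∧ s' j = b')).card

lemma mm_comm (s s' : Fin n → Bool) (b b' : Bool) : mm s s' b b' = mm s' s b' b := by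
  simp only [mm, and_comm]

lemma mm_add_left (s s' : Fin n → Bool) (b : Bool) :
    mm s s' b false + mm s s' b true = cnt s b := by
  unfold mm cnt
  rw [← Finset.filter_filter, ← Finset.filter_filter]
  have := Finset.card_filter_add_card_filter_not
    (s := univ.filter (fun j => s j = b)) (p := fun j => s' j = false)
  simpa [Bool.not_eq_false] using this

lemma mm_add_right (s s' : Fin n → Bool) (b : Bool) :
    mm s s' false b + mm s s' true b = cnt s' b := by
  rw [mm_comm s s' false b, mm_comm s s' true b, mm_add_left]

lemma cnt_add (s : Fin n → Bool) : cnt s false + cnt s true = n := by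
  unfold cnt
  have := Finset.card_filter_add_card_filter_not
    (s := (univ : Finset (Fin n))) (p := fun j => s j = false)
  simpa [Bool.not_eq_false] using this

lemma build (t s : Fin n → Bool) (n₁ n₂ a : ℕ)
    (ht : cnt t false = n₁) (hs : cnt s false = n₁) (hn12 : n₁ + n₂ = n)
    (α β : ℕ)
    (hαa : α ≤ a) (hβa : β ≤ a) (hβm : β ≤ mm s t true false)
    (hαm : a ≤ α + mm s t true false) (hα1 : α + mm s t true false ≤ n₁)
    (hβ2 : a + mm s t true false ≤ β + n₂) :
    ∃ s' : Fin n → Bool, cnt s' false = n₁ ∧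
      mm s' t true false + β = mm s t true false + α ∧
      mm s s' false true = a ∧ mm s s' true false = a ∧
      mm s s' false false + a = n₁ ∧ mm s s' true true + a = n₂ := by
  set m := mm s t true false with hm
  -- basic count facts
  have h1 : mm s t false false + mm s t false true = n₁ := by
    rw [mm_add_left, hs]
  have h2 : mm s t false false + mm s t true false = n₁ := by
    rw [mm_add_right, ht]
  have hsymm : mm s t false true = m := by omega
  have hcnt2 : cnt s true = n₂ := by have := cnt_add s; omega
  have h3 : mm s t true false + mm s t true true = n₂ := by
    rw [mm_add_left, hcnt2]
  -- the four pieces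
  obtain ⟨A₁, hA₁sub, hA₁card⟩ := Finset.exists_subset_card_eq
    (s := univ.filter (fun j => s j = false ∧ t j = false)) (n := α) (by
      show α ≤ mm s t false false; omega)
  obtain ⟨A₂, hA₂sub, hA₂card⟩ := Finset.exists_subset_card_eq
    (s := univ.filter (fun j => s j = false ∧ t j = true)) (n := (a - α)) (by
      show a - α ≤ mm s t false true; omega)
  obtain ⟨B₁, hB₁sub, hB₁card⟩ := Finset.exists_subset_card_eq
    (s := univ.filter (fun j => s j = true ∧ t j = false)) (n := β) (by
      show β ≤ mm s t true false; omega)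
  obtain ⟨B₂, hB₂sub, hB₂card⟩ := Finset.exists_subset_card_eq
    (s := univ.filter (fun j => s j = true ∧ t j = true)) (n := (a - β)) (by
      show a - β ≤ mm s t true true; omega)
  have hA₁' : ∀ j ∈ A₁, s j = false ∧ t j = false := fun j hj =>
    (Finset.mem_filter.mp (hA₁sub hj)).2
  have hA₂' : ∀ j ∈ A₂, s j = false ∧ t j = true := fun j hj =>
    (Finset.mem_filter.mp (hA₂sub hj)).2
  have hB₁' : ∀ j ∈ B₁, s j = true ∧ t j = false := fun j hj =>
    (Finset.mem_filter.mp (hB₁sub hj)).2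
  have hB₂' : ∀ j ∈ B₂, s j = true ∧ t j = true := fun j hj =>
    (Finset.mem_filter.mp (hB₂sub hj)).2
  set F : Finset (Fin n) := A₁ ∪ A₂ ∪ B₁ ∪ B₂ with hF
  set s' : Fin n → Bool := fun j => if j ∈ F then !(s j) else s j with hs'
  have hmemF : ∀ j, j ∈ F ↔ j ∈ A₁ ∨ j ∈ A₂ ∨ j ∈ B₁ ∨ j ∈ B₂ := by
    intro j; simp [hF, Finset.mem_union, or_assoc]
  -- mm s s' false true = A₁ ∪ A₂
  have eq1 : univ.filter (fun j => s j = false ∧ s' j = true) = A₁ ∪ A₂ := by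
    ext j
    simp only [Finset.mem_filter, Finset.mem_union, mem_univ, true_and, hs']
    constructor
    · rintro ⟨hsj, hsj'⟩
      by_cases hjF : j ∈ F
      · rw [if_pos hjF] at hsj'
        rcases (hmemF j).mp hjF with h | h | h | h
        · exact Or.inl h
        · exact Or.inr h
        · exact absurd (hB₁' j h).1 (by simp [hsj])
        · exact absurd (hB₂' j h).1 (by simp [hsj])
      · rw [if_neg hjF] at hsj'; rw [hsj] at hsj'; exact absurd hsj' (by simp)
    · intro h
      have hjF : j ∈ F := (hmemF j).mpr (by tauto)
      rcases h with h | h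
      · exact ⟨(hA₁' j h).1, by rw [if_pos hjF, (hA₁' j h).1]; rfl⟩
      · exact ⟨(hA₂' j h).1, by rw [if_pos hjF, (hA₂' j h).1]; rfl⟩
  have dA : Disjoint A₁ A₂ := by
    rw [Finset.disjoint_left]
    intro j h1 h2
    have := (hA₁' j h1).2; have := (hA₂' j h2).2; simp_all
  have c1 : mm s s' false true = a := by
    rw [mm, eq1, Finset.card_union_of_disjoint dA, hA₁card, hA₂card]; omega
  -- mm s s' true false = B₁ ∪ B₂
  have eq2 : univ.filter (fun j => s j = true ∧ s' j = false) = B₁ ∪ B₂ := by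
    ext j
    simp only [Finset.mem_filter, Finset.mem_union, mem_univ, true_and, hs']
    constructor
    · rintro ⟨hsj, hsj'⟩
      by_cases hjF : j ∈ F
      · rw [if_pos hjF] at hsj'
        rcases (hmemF j).mp hjF with h | h | h | h
        · exact absurd (hA₁' j h).1 (by simp [hsj])
        · exact absurd (hA₂' j h).1 (by simp [hsj])
        · exact Or.inl h
        · exact Or.inr h
      · rw [if_neg hjF] at hsj'; rw [hsj] at hsj'; exact absurd hsj' (by simp)
    · intro h
      have hjF : j ∈ F := (hmemF j).mpr (by tauto)
      rcases h with h | h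
      · exact ⟨(hB₁' j h).1, by rw [if_pos hjF, (hB₁' j h).1]; rfl⟩
      · exact ⟨(hB₂' j h).1, by rw [if_pos hjF, (hB₂' j h).1]; rfl⟩
  have dB : Disjoint B₁ B₂ := by
    rw [Finset.disjoint_left]
    intro j h1 h2
    have := (hB₁' j h1).2; have := (hB₂' j h2).2; simp_all
  have c2 : mm s s' true false = a := by
    rw [mm, eq2, Finset.card_union_of_disjoint dB, hB₁card, hB₂card]; omega
  -- remaining counts
  have c3 : mm s s' false false + a = n₁ := by
    have := mm_add_left s s' false; rw [hs] at this; omega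
  have c4 : mm s s' true true + a = n₂ := by
    have := mm_add_left s s' true; rw [hcnt2] at this; omega
  have c5 : cnt s' false = n₁ := by
    have := mm_add_right s s' false; omega
  -- new mismatch
  have eq3 : univ.filter (fun j => s' j = true ∧ t j = false)
      = (univ.filter (fun j => s j = true ∧ t j = false)) \ B₁ ∪ A₁ := by
    ext j
    simp only [Finset.mem_filter, Finset.mem_union, Finset.mem_sdiff, mem_univ,
      true_and, hs']
    constructor
    · rintro ⟨hsj', htj⟩
      by_cases hjF : j ∈ F
      · rw [if_pos hjF] at hsj'
        have hsj : s j = false := by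
          cases hsb : s j
          · rfl
          · rw [hsb] at hsj'; exact absurd hsj' (by simp)
        rcases (hmemF j).mp hjF with h | h | h | h
        · exact Or.inr h
        · exact absurd (hA₂' j h).2 (by simp [htj])
        · exact absurd (hB₁' j h).1 (by simp [hsj])
        · exact absurd (hB₂' j h).1 (by simp [hsj])
      · rw [if_neg hjF] at hsj'
        refine Or.inl ⟨⟨hsj', htj⟩, fun hB => hjF ((hmemF j).mpr (by tauto))⟩
    · rintro (⟨⟨hsj, htj⟩, hjB⟩ | h)
      · have hjF : j ∉ F := by
          intro hjF
          rcases (hmemF j).mp hjF with h | h | h | h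
          · exact absurd (hA₁' j h).1 (by simp [hsj])
          · exact absurd (hA₂' j h).1 (by simp [hsj])
          · exact hjB h
          · exact absurd (hB₂' j h).2 (by simp [htj])
        rw [if_neg hjF]; exact ⟨hsj, htj⟩
      · have hjF : j ∈ F := (hmemF j).mpr (by tauto)
        rw [if_pos hjF, (hA₁' j h).1]
        exact ⟨rfl, (hA₁' j h).2⟩
  have dC : Disjoint ((univ.filter (fun j => s j = true ∧ t j = false)) \ B₁) A₁ := by
    rw [Finset.disjoint_left]
    intro j h1 h2
    have := (Finset.mem_filter.mp (Finset.mem_sdiff.mp h1).1).2.1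
    have := (hA₁' j h2).1; simp_all
  have c6 : mm s' t true false + β = m + α := by
    have hcard : mm s' t true false = (m - β) + α := by
      rw [mm, eq3, Finset.card_union_of_disjoint dC,
        Finset.card_sdiff_of_subset hB₁sub, hA₁card, hB₁card]
      rfl
    omega
  exact ⟨s', c5, c6, c1, c2, c3, c4⟩


/-- bounds on the mismatch count -/
lemma mism_le (t s : Fin n → Bool) (n₁ n₂ : ℕ)
    (ht : cnt t false = n₁) (hs : cnt s false = n₁) (hn12 : n₁ + n₂ = n) :
    mm s t true false ≤ n₁ ∧ mm s t true false ≤ n₂ := by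
  have h1 := mm_add_right s t false
  have h2 := mm_add_left s t true
  have h3 := cnt_add s
  rw [ht] at h1
  constructor
  · omega
  · have : cnt s true = n₂ := by omega
    omega

def Good (a n₁ n₂ : ℕ) (s s' : Fin n → Bool) : Prop :=
  mm s s' false true = a ∧ mm s s' true false = a ∧
  mm s s' false false + a = n₁ ∧ mm s s' true true + a = n₂

set_option maxHeartbeats 1000000 in
lemma step_to (t s : Fin n → Bool) (n₁ n₂ a c₁ c₂ : ℕ)
    (ht : cnt t false = n₁) (hs : cnt s false = n₁) (hn12 : n₁ + n₂ = n)
    (hc1 : n₁ = a + c₁) (hc2 : n₂ = a + c₂)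
    (m' : ℕ)
    (hlo1 : a - mm s t true false ≤ m') (hlo2 : mm s t true false - a ≤ m')
    (hhi : m' + (mm s t true false - c₁) + (mm s t true false - c₂)
            ≤ mm s t true false + a) :
    ∃ s', cnt s' false = n₁ ∧ mm s' t true false = m' ∧ Good a n₁ n₂ s s' := by
  obtain ⟨hm1, hm2⟩ := mism_le t s n₁ n₂ ht hs hn12
  set m := mm s t true false with hm
  set β := max (max (a - (n₂ - m)) (a - m')) (m - m') with hβ
  set α := β + m' - m with hα
  have hβm' : β + m' ≥ m := by omega
  obtain ⟨s', h1, h2, h3, h4, h5, h6⟩ := build t s n₁ n₂ a ht hs hn12 α β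
    (by omega) (by omega) (by omega) (by omega) (by omega) (by omega)
  exact ⟨s', h1, by omega, h3, h4, h5, h6⟩

lemma base_eq (t s : Fin n → Bool) (n₁ n₂ : ℕ)
    (ht : cnt t false = n₁) (hs : cnt s false = n₁)
    (h0 : mm s t true false = 0) : ∀ j, s j = t j := by
  have h1 := mm_add_left s t false
  have h2 := mm_add_right s t false
  rw [hs] at h1; rw [ht] at h2
  have hft : mm s t false true = 0 := by omega
  intro j
  by_contra hne
  cases hsj : s j <;> cases htj : t j
  · rw [hsj, htj] at hne; exact hne rfl
  · have hjm : j ∈ Finset.univ.filter (fun j => s j = false ∧ t j = true) := by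
      simp [hsj, htj]
    rw [Finset.card_eq_zero.mp hft] at hjm
    exact absurd hjm (Finset.notMem_empty j)
  · have hjm : j ∈ Finset.univ.filter (fun j => s j = true ∧ t j = false) := by
      simp [hsj, htj]
    rw [Finset.card_eq_zero.mp h0] at hjm
    exact absurd hjm (Finset.notMem_empty j)
  · rw [hsj, htj] at hne; exact hne rfl

set_option maxHeartbeats 1000000 in
lemma chain (t : Fin n → Bool) (n₁ n₂ a c₁ c₂ : ℕ)
    (ht : cnt t false = n₁) (hn12 : n₁ + n₂ = n)
    (hc1 : n₁ = a + c₁) (hc2 : n₂ = a + c₂) (ha : 1 ≤ a) :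
    ∀ (k : ℕ) (s : Fin n → Bool), cnt s false = n₁ →
      mm s t true false ≤ k * min (2*a) (c₁ + c₂) →
      ∃ A : ℕ → Fin n → Bool, A 0 = s ∧ (∀ j, A (2*k) j = t j) ∧
        ∀ i < 2*k, Good a n₁ n₂ (A i) (A (i+1)) := by
  intro k
  induction k with
  | zero =>
    intro s hs hms
    refine ⟨fun _ => s, rfl, ?_, by omega⟩
    have : mm s t true false = 0 := by omega
    exact base_eq t s n₁ n₂ ht hs this
  | succ k ih =>
    intro s hs hms
    obtain ⟨hmle1, hmle2⟩ := mism_le t s n₁ n₂ ht hs hn12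
    have hms2 : mm s t true false ≤ k * min (2*a) (c₁ + c₂) + min (2*a) (c₁ + c₂) := by
      rw [Nat.succ_mul] at hms; exact hms
    obtain ⟨K, hK⟩ : ∃ K, k * min (2*a) (c₁ + c₂) = K := ⟨_, rfl⟩
    rw [hK] at hms2
    have hwle1 : min (2*a) (c₁ + c₂) ≤ 2*a := Nat.min_le_left _ _
    have hwle2 : min (2*a) (c₁ + c₂) ≤ c₁ + c₂ := Nat.min_le_right _ _
    set m := mm s t true false with hm
    set E := min (a + min c₁ c₂) K with hE
    set m₁ := max ((a - m) + (m - a)) (a - E) with hm₁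
    obtain ⟨s₁, hs₁cnt, hs₁m, hs₁good⟩ := step_to t s n₁ n₂ a c₁ c₂ ht hs hn12 hc1 hc2
      m₁ (by omega) (by omega) (by omega)
    obtain ⟨hm₁le1, hm₁le2⟩ := mism_le t s₁ n₁ n₂ ht hs₁cnt hn12
    set m₂ := (a - m₁) + (m₁ - a) with hm₂
    obtain ⟨s₂, hs₂cnt, hs₂m, hs₂good⟩ := step_to t s₁ n₁ n₂ a c₁ c₂ ht hs₁cnt hn12 hc1 hc2
      m₂ (by omega) (by omega) (by omega)
    have hm₂K : mm s₂ t true false ≤ k * min (2*a) (c₁ + c₂) := by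
      rw [hK, hs₂m]; omega
    obtain ⟨A', hA'0, hA't, hA'good⟩ := ih s₂ hs₂cnt hm₂K
    refine ⟨fun i => if i = 0 then s else if i = 1 then s₁ else A' (i - 2), by simp, ?_, ?_⟩
    · intro j
      have h2k : 2 * (k+1) = 2*k + 2 := by ring
      simp only [h2k]
      have e0 : ¬(2*k+2 = 0) := by omega
      have e1 : ¬(2*k+2 = 1) := by omega
      simp only [if_neg e0, if_neg e1]
      have e2 : 2*k+2-2 = 2*k := by omega
      rw [e2]
      exact hA't j
    · intro i hi
      rcases Nat.lt_or_ge i 2 with h2 | h2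
      · interval_cases i
        · simpa using hs₁good
        · simpa [hA'0] using hs₂good
      · have e1 : ¬(i = 0) := by omega
        have e2 : ¬(i = 1) := by omega
        have e3 : ¬(i + 1 = 0) := by omega
        have e4 : ¬(i + 1 = 1) := by omega
        simp only [if_neg e1, if_neg e2, if_neg e3, if_neg e4]
        have e5 : i + 1 - 2 = (i - 2) + 1 := by omega
        rw [e5]
        exact hA'good (i-2) (by omega)

lemma prim_mixed {E : Set (Bool × Bool)} (h : IsPrimitive E) (u : Bool) :
    (u, !u) ∈ E := by
  obtain ⟨N₀, hN⟩ := h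
  obtain ⟨f, hf0, hfN, hf⟩ := hN (N₀+1) (by omega) u (!u)
  by_contra hne
  have key : ∀ i ≤ N₀+1, f i = u := by
    intro i hi
    induction i with
    | zero => exact hf0
    | succ i ih =>
      have h1 : f i = u := ih (by omega)
      cases hu : f (i+1)
      · cases u
        · rfl
        · exact absurd (hf i (by omega)) (by rw [h1, hu]; exact hne)
      · cases u
        · exact absurd (hf i (by omega)) (by rw [h1, hu]; exact hne)
        · rfl
  have := key (N₀+1) le_rfl
  rw [hfN] at this
  cases u <;> simp_all

lemma prim_loop {E : Set (Bool × Bool)} (h : IsPrimitive E) :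
    (false, false) ∈ E ∨ (true, true) ∈ E := by
  by_contra hne
  push_neg at hne
  obtain ⟨hf0', ht0'⟩ := hne
  obtain ⟨N₀, hN⟩ := h
  obtain ⟨f, hf0, hfN, hf⟩ := hN (2*N₀+1) (by omega) false false
  have key : ∀ i ≤ 2*N₀+1, f i = decide (i % 2 = 1) := by
    intro i hi
    induction i with
    | zero => simpa using hf0
    | succ i ih =>
      have h1 : f i = decide (i % 2 = 1) := ih (by omega)
      have hedge := hf i (by omega)
      have hflip : f (i+1) = !(f i) := by
        by_contra hc
        have heq : f (i+1) = f i := by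
          cases hfi : f i <;> cases hfi1 : f (i+1) <;> simp_all
        rw [heq] at hedge
        cases hfi : f i
        · rw [hfi] at hedge; exact hf0' hedge
        · rw [hfi] at hedge; exact ht0' hedge
      rw [hflip, h1]
      rcases Nat.even_or_odd i with he | ho
      · have h2 : i % 2 = 0 := Nat.even_iff.mp he
        have h3 : (i+1) % 2 = 1 := by omega
        simp [h2, h3]
      · have h2 : i % 2 = 1 := Nat.odd_iff.mp ho
        have h3 : (i+1) % 2 = 0 := by omega
        simp [h2, h3]
  have := key (2*N₀+1) le_rfl
  rw [hfN] at this
  have : ((2*N₀+1) % 2) = 1 := by omega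
  simp_all

lemma cnt_target (n₁ : ℕ) (hn : 0 < n) (hn₁ : n₁ ≤ n) :
    cnt (fun j : Fin n => decide (n₁ ≤ ((j:ℕ)+1) % n)) false = n₁ := by
  show (univ.filter (fun j : Fin n =>
      (decide (n₁ ≤ ((j:ℕ)+1) % n)) = false)).card = n₁
  have hfc : (univ.filter (fun j : Fin n => (decide (n₁ ≤ ((j:ℕ)+1) % n)) = false))
      = (univ.filter (fun j : Fin n => ((j:ℕ)+1) % n < n₁)) := by
    apply Finset.filter_congr
    intro j _
    simp
  rw [hfc]
  have key : (univ.filter (fun j : Fin n => ((j:ℕ)+1) % n < n₁)).card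
      = (Finset.range n₁).card := by
    apply Finset.card_nbij' (i := fun j : Fin n => ((j:ℕ)+1) % n)
      (j := fun i : ℕ => (⟨(if i = 0 then n-1 else i-1) % n, Nat.mod_lt _ hn⟩ : Fin n))
    · intro j hj
      simp only [Finset.mem_coe, Finset.mem_filter] at hj
      exact Finset.mem_range.mpr hj.2
    · intro i hi
      have hi' : i < n₁ := Finset.mem_range.mp hi
      simp only [Finset.mem_coe, Finset.mem_filter, Finset.mem_univ, true_and]
      by_cases h0 : i = 0
      · rw [h0, if_pos rfl, Nat.mod_eq_of_lt (show n-1 < n by omega),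
          show n-1+1 = n by omega, Nat.mod_self]
        omega
      · rw [if_neg h0, Nat.mod_eq_of_lt (show i-1 < n by omega),
          show i-1+1 = i by omega, Nat.mod_eq_of_lt (show i < n by omega)]
        omega
    · intro j hj
      simp only [Finset.mem_coe, Finset.mem_filter, Finset.mem_univ, true_and] at hj
      have hjlt : (j:ℕ) < n := j.isLt
      apply Fin.ext
      simp only
      by_cases he : (j:ℕ)+1 = n
      · rw [he, Nat.mod_self] at hj ⊢
        rw [if_pos rfl, Nat.mod_eq_of_lt (show n-1 < n by omega)]
        omega
      · rw [Nat.mod_eq_of_lt (show (j:ℕ)+1 < n by omega)] at hj ⊢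
        rw [if_neg (by omega), Nat.mod_eq_of_lt (show (j:ℕ)+1-1 < n by omega)]
        omega
    · intro i hi
      have hi' : i < n₁ := Finset.mem_range.mp hi
      simp only
      by_cases h0 : i = 0
      · rw [h0, if_pos rfl, Nat.mod_eq_of_lt (show n-1 < n by omega),
          show n-1+1 = n by omega, Nat.mod_self]
      · rw [if_neg h0, Nat.mod_eq_of_lt (show i-1 < n by omega),
          show i-1+1 = i by omega, Nat.mod_eq_of_lt (show i < n by omega)]
  rw [key, Finset.card_range]

end Stmt15



set_option maxHeartbeats 1000000 in
/-- Theorem 1: Let `p = max(P(00), P(11))`, `q = min(P(00), P(11))`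
for an `n`-integral stationary Markov chain `P` (positive on all edges) on a
primitive subgraph of `D_{1,2}`, and let
`Z = max(2(2+⌈(P(10)+q−p)/p⌉), 2(1+⌈q/(2P(01))⌉))`.  For any `n`-tuple `r` with
`n₁ = π(0)n` zeros and `n₂ = π(1)n` ones, there is a `(G,P,n)`-array with `Z+1` rows
(each pair of consecutive rows containing each edge `e` exactly `P(e)n` times as a
column, all columns being paths in `G`) whose first row is `r` and whose last row is
the left cyclic shift of `U_π` (the row of `n₁` zeros followed by `n₂` ones). -/
theorem stmt15 (E : Set (Bool × Bool)) (hprim : IsPrimitive E)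
    (P : Bool × Bool → ℝ)
    (hpos : ∀ e ∈ E, 0 < P e) (hsupp : ∀ e ∉ E, P e = 0)
    (hsum : P (false, false) + P (false, true) + P (true, false) + P (true, true) = 1)
    (hstat : ∀ u : Bool, P (u, false) + P (u, true) = P (false, u) + P (true, u))
    (n : ℕ) (hn : 0 < n) (hint : ∀ e, ∃ z : ℤ, P e * n = (z : ℝ))
    (n₁ n₂ : ℕ)
    (hn1 : (n₁ : ℝ) = (P (false, false) + P (false, true)) * n)
    (hn2 : (n₂ : ℝ) = (P (true, false) + P (true, true)) * n)
    (p q : ℝ)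
    (hp : p = max (P (false, false)) (P (true, true)))
    (hq : q = min (P (false, false)) (P (true, true)))
    (Z : ℤ)
    (hZ : Z = max (2 * (2 + ⌈(P (true, false) + q - p) / p⌉))
                  (2 * (1 + ⌈q / (2 * P (false, true))⌉)))
    (r : Fin n → Bool)
    (hr0 : (Finset.univ.filter (fun j => r j = false)).card = n₁)
    (hr1 : (Finset.univ.filter (fun j => r j = true)).card = n₂) :
    ∃ A : ℕ → Fin n → Bool,
      A 0 = r ∧
      (∀ j : Fin n, A Z.toNat j = decide (n₁ ≤ ((j : ℕ) + 1) % n)) ∧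
      (∀ i < Z.toNat, ∀ j : Fin n, (A i j, A (i + 1) j) ∈ E) ∧
      (∀ i < Z.toNat, ∀ e : Bool × Bool,
        ((Finset.univ.filter (fun j => (A i j, A (i + 1) j) = e)).card : ℝ)
          = P e * n) := by
  classical
  -- positivity facts
  have hnR : (0:ℝ) < n := by exact_mod_cast hn
  have hP01 : 0 < P (false, true) := hpos _ (by simpa using Stmt15.prim_mixed hprim false)
  have hP10 : 0 < P (true, false) := hpos _ (by simpa using Stmt15.prim_mixed hprim true)
  have hPnn : ∀ e, 0 ≤ P e := by
    intro e
    by_cases he : e ∈ E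
    · exact le_of_lt (hpos e he)
    · rw [hsupp e he]
  have heq : P (false, true) = P (true, false) := by
    have := hstat false
    linarith
  have hploop : 0 < p := by
    rcases Stmt15.prim_loop hprim with h | h
    · have := hpos _ h
      rw [hp]
      exact lt_max_of_lt_left this
    · have := hpos _ h
      rw [hp]
      exact lt_max_of_lt_right this
  have hq0 : 0 ≤ q := by
    rw [hq]
    exact le_min (hPnn _) (hPnn _)
  -- integer versions
  obtain ⟨za, hza⟩ := hint (false, true)
  obtain ⟨zc₁, hzc₁⟩ := hint (false, false)
  obtain ⟨zc₂, hzc₂⟩ := hint (true, true)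
  have hza0 : 0 < za := by
    have : (0:ℝ) < za := by rw [← hza]; exact mul_pos hP01 hnR
    exact_mod_cast this
  have hzc₁0 : 0 ≤ zc₁ := by
    have : (0:ℝ) ≤ zc₁ := by rw [← hzc₁]; exact mul_nonneg (hPnn _) (le_of_lt hnR)
    exact_mod_cast this
  have hzc₂0 : 0 ≤ zc₂ := by
    have : (0:ℝ) ≤ zc₂ := by rw [← hzc₂]; exact mul_nonneg (hPnn _) (le_of_lt hnR)
    exact_mod_cast this
  set a : ℕ := za.toNat with ha
  set c₁ : ℕ := zc₁.toNat with hc₁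
  set c₂ : ℕ := zc₂.toNat with hc₂
  have haR : (a:ℝ) = P (false, true) * n := by
    rw [hza, ha]
    exact_mod_cast congrArg (Int.cast : ℤ → ℝ) (Int.toNat_of_nonneg (le_of_lt hza0))
  have hc₁R : (c₁:ℝ) = P (false, false) * n := by
    rw [hzc₁, hc₁]
    exact_mod_cast congrArg (Int.cast : ℤ → ℝ) (Int.toNat_of_nonneg hzc₁0)
  have hc₂R : (c₂:ℝ) = P (true, true) * n := by
    rw [hzc₂, hc₂]
    exact_mod_cast congrArg (Int.cast : ℤ → ℝ) (Int.toNat_of_nonneg hzc₂0)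
  have ha1 : 1 ≤ a := by
    rw [ha]; omega
  have hn₁eq : n₁ = a + c₁ := by
    have : (n₁:ℝ) = ((a + c₁ : ℕ) : ℝ) := by
      push_cast
      rw [haR, hc₁R, hn1]
      ring
    exact_mod_cast this
  have hn₂eq : n₂ = a + c₂ := by
    have : (n₂:ℝ) = ((a + c₂ : ℕ) : ℝ) := by
      push_cast
      rw [haR, hc₂R, hn2, ← heq]
      ring
    exact_mod_cast this
  have hn12 : n₁ + n₂ = n := by
    have h := Stmt15.cnt_add r
    simp only [Stmt15.cnt] at h
    rw [hr0, hr1] at h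
    exact h
  -- min / max
  set cp : ℕ := max c₁ c₂ with hcp
  set cq : ℕ := min c₁ c₂ with hcq
  have hcpR : (cp:ℝ) = p * n := by
    rw [hcp, hp]
    push_cast [Nat.cast_max]
    rw [hc₁R, hc₂R, max_mul_of_nonneg _ _ (le_of_lt hnR)]
  have hcqR : (cq:ℝ) = q * n := by
    rw [hcq, hq]
    push_cast [Nat.cast_min]
    rw [hc₁R, hc₂R, min_mul_of_nonneg _ _ (le_of_lt hnR)]
  have hcp1 : 1 ≤ cp := by
    have h1 : (0:ℝ) < (cp:ℝ) := by rw [hcpR]; exact mul_pos hploop hnR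
    have h2 : 0 < cp := by exact_mod_cast h1
    omega
  -- KZ
  set KZ : ℤ := max (2 + ⌈(P (true, false) + q - p) / p⌉)
                    (1 + ⌈q / (2 * P (false, true))⌉) with hKZ
  have hZK : Z = 2 * KZ := by
    rw [hZ, hKZ]
    rcases le_total (2 + ⌈(P (true, false) + q - p) / p⌉)
      (1 + ⌈q / (2 * P (false, true))⌉) with h | h
    · rw [max_eq_right h, max_eq_right (by omega)]
    · rw [max_eq_left h, max_eq_left (by omega)]
  have hceil2 : (0:ℤ) ≤ ⌈q / (2 * P (false, true))⌉ := by
    apply Int.ceil_nonneg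
    positivity
  have hKZ1 : 1 ≤ KZ := le_trans (by omega) (le_max_right _ _)
  have hZtoNat : Z.toNat = 2 * KZ.toNat := by omega
  -- main bound : a + cq ≤ KZ.toNat * min (2a) (c₁+c₂)
  have hKZR : ((KZ.toNat : ℕ) : ℝ) = (KZ : ℝ) := by
    exact_mod_cast congrArg (Int.cast : ℤ → ℝ) (Int.toNat_of_nonneg (by omega : (0:ℤ) ≤ KZ))
  have hbound : a + cq ≤ KZ.toNat * min (2*a) (c₁ + c₂) := by
    have : ((a + cq : ℕ) : ℝ) ≤ ((KZ.toNat * min (2*a) (c₁ + c₂) : ℕ) : ℝ) := by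
      push_cast [Nat.cast_min]
      rw [hKZR]
      rcases le_total (2*(a:ℝ)) ((c₁:ℝ) + (c₂:ℝ)) with hmin | hmin
      · rw [min_eq_left hmin]
        have h2 : (1 + ⌈q / (2 * P (false, true))⌉ : ℝ) ≤ (KZ:ℝ) := by
          exact_mod_cast le_max_right _ _
        have h3 : q / (2 * P (false, true)) ≤ (⌈q / (2 * P (false, true))⌉ : ℝ) :=
          Int.le_ceil _
        have hdiv : q / (2 * P (false, true)) = (cq:ℝ) / (2*(a:ℝ)) := by
          rw [div_eq_div_iff (by positivity : (2:ℝ) * P (false, true) ≠ 0) (by positivity : (2:ℝ)*(a:ℝ) ≠ 0)]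
          rw [haR, hcqR]
          ring
        rw [hdiv] at h2
        have h4 : 1 + (cq:ℝ)/(2*(a:ℝ)) ≤ (KZ:ℝ) := by
          rw [hdiv] at h3
          linarith
        have h5 : (1 + (cq:ℝ)/(2*(a:ℝ))) * (2*(a:ℝ)) ≤ (KZ:ℝ) * (2*(a:ℝ)) := by
          apply mul_le_mul_of_nonneg_right h4
          positivity
        rw [add_mul, one_mul, div_mul_cancel₀ _ (by positivity : 2*(a:ℝ) ≠ 0)] at h5
        push_cast
        linarith
      · rw [min_eq_right hmin]
        have hcpq : (c₁:ℝ) + (c₂:ℝ) = (cp:ℝ) + (cq:ℝ) := by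
          exact_mod_cast congrArg (Nat.cast : ℕ → ℝ)
            (by omega : c₁ + c₂ = cp + cq)
        have h2 : (2 + ⌈(P (true, false) + q - p) / p⌉ : ℝ) ≤ (KZ:ℝ) := by
          exact_mod_cast le_max_left _ _
        have h3 : (P (true, false) + q - p) / p ≤ (⌈(P (true, false) + q - p) / p⌉ : ℝ) :=
          Int.le_ceil _
        have hcpRpos : (0:ℝ) < cp := by
          have : (1:ℝ) ≤ cp := by exact_mod_cast hcp1
          linarith
        have hdiv : (P (true, false) + q - p) / p = ((a:ℝ) + cq - cp) / (cp:ℝ) := by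
          rw [div_eq_div_iff (ne_of_gt hploop) (ne_of_gt hcpRpos)]
          rw [haR, hcqR, hcpR, ← heq]
          ring
        rw [hdiv] at h2
        have h4 : 2 + ((a:ℝ) + cq - cp)/(cp:ℝ) ≤ (KZ:ℝ) := by
          rw [hdiv] at h3
          linarith
        have h5 : (2 + ((a:ℝ) + cq - cp)/(cp:ℝ)) * (cp:ℝ) ≤ (KZ:ℝ) * (cp:ℝ) :=
          mul_le_mul_of_nonneg_right h4 (le_of_lt hcpRpos)
        rw [add_mul, div_mul_cancel₀ _ (ne_of_gt hcpRpos)] at h5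
        have h6 : (KZ:ℝ) * (cp:ℝ) ≤ (KZ:ℝ) * ((c₁:ℝ) + (c₂:ℝ)) := by
          apply mul_le_mul_of_nonneg_left _ (by exact_mod_cast (by omega : (0:ℤ) ≤ KZ))
          rw [hcpq]
          have : (0:ℝ) ≤ (cq:ℝ) := by positivity
          linarith
        push_cast
        linarith [h5, h6]
    exact_mod_cast this
  -- the target row
  set t : Fin n → Bool := fun j => decide (n₁ ≤ ((j:ℕ)+1) % n) with htdef
  have ht : Stmt15.cnt t false = n₁ := Stmt15.cnt_target n₁ hn (by omega)
  have hrs : Stmt15.cnt r false = n₁ := hr0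
  -- initial mismatch bound
  obtain ⟨hml1, hml2⟩ := Stmt15.mism_le t r n₁ n₂ ht hrs hn12
  have hminit : Stmt15.mm r t true false ≤ KZ.toNat * min (2*a) (c₁ + c₂) := by
    have h1 : Stmt15.mm r t true false ≤ a + cq := by omega
    omega
  -- apply chain
  obtain ⟨A, hA0, hAt, hAgood⟩ := Stmt15.chain t n₁ n₂ a c₁ c₂ ht hn12 hn₁eq hn₂eq ha1
    KZ.toNat r hrs hminit
  have hcounts : ∀ i < Z.toNat, ∀ e : Bool × Bool,
      ((Finset.univ.filter (fun j => (A i j, A (i + 1) j) = e)).card : ℝ) = P e * n := by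
    intro i hi e
    have hi' : i < 2 * KZ.toNat := by omega
    obtain ⟨g1, g2, g3, g4⟩ := hAgood i hi'
    obtain ⟨b, b'⟩ := e
    have hfe : (Finset.univ.filter (fun j => (A i j, A (i + 1) j) = (b, b')))
        = (Finset.univ.filter (fun j => A i j = b ∧ A (i+1) j = b')) := by
      apply Finset.filter_congr
      intro j _
      simp [Prod.ext_iff]
    rw [hfe]
    cases b <;> cases b'
    · -- (false,false) : count c₁
      have : Stmt15.mm (A i) (A (i+1)) false false = c₁ := by omega
      rw [show (Finset.univ.filter (fun j => A i j = false ∧ A (i+1) j = false)).card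
        = Stmt15.mm (A i) (A (i+1)) false false from rfl, this, hc₁R]
    · have : Stmt15.mm (A i) (A (i+1)) false true = a := g1
      rw [show (Finset.univ.filter (fun j => A i j = false ∧ A (i+1) j = true)).card
        = Stmt15.mm (A i) (A (i+1)) false true from rfl, this, haR]
    · have : Stmt15.mm (A i) (A (i+1)) true false = a := g2
      rw [show (Finset.univ.filter (fun j => A i j = true ∧ A (i+1) j = false)).card
        = Stmt15.mm (A i) (A (i+1)) true false from rfl, this, haR, heq]
    · have : Stmt15.mm (A i) (A (i+1)) true true = c₂ := by omega
      rw [show (Finset.univ.filter (fun j => A i j = true ∧ A (i+1) j = true)).card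
        = Stmt15.mm (A i) (A (i+1)) true true from rfl, this, hc₂R]
  refine ⟨A, hA0, ?_, ?_, hcounts⟩
  · intro j
    rw [hZtoNat]
    exact hAt j
  · intro i hi j
    by_contra hnotE
    have hzero : P (A i j, A (i + 1) j) = 0 := hsupp _ hnotE
    have hcard := hcounts i hi (A i j, A (i + 1) j)
    rw [hzero, zero_mul] at hcard
    have hmem : j ∈ Finset.univ.filter
        (fun j' => (A i j', A (i + 1) j') = (A i j, A (i + 1) j)) := by
      simp
    have : 0 < (Finset.univ.filter
        (fun j' => (A i j', A (i + 1) j') = (A i j, A (i + 1) j))).card :=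
      Finset.card_pos.mpr ⟨j, hmem⟩
    have hc0 : (Finset.univ.filter (fun j' => (A i j', A (i + 1) j') =
      (A i j, A (i + 1) j))).card = 0 := by exact_mod_cast hcard
    omega
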